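/- Let V be a real normed vector space, a : V × V → ℝ a continuous symmetric bilinear form, χ > 0 a real number, and T > 0. Let u : [0, T] → V be continuously differentiable and let ℓ : [0, T] × V → ℝ be such that ℓ(s, ·) is linear for each s, the function s ↦ ℓ(s, u'(s)) is continuous on [0, T], and suppose a(u(t), φ) + χ a(u'(t), φ) = ℓ(t, φ) for all φ ∈ V and all t ∈ [0, T]. Then for every t ∈ [0, T]: (1/2) a(u(t), u(t)) + ∫_0^t χ a(u'(s), u'(s)) ds = (1/2) a(u(0), u(0)) + ∫_0^t ℓ(s, u'(s)) ds. -/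

import Mathlib

open intervalIntegral

theorem continuous_energy_balance_kelvin_voigt
    {V : Type*} [NormedAddCommGroup V] [NormedSpace ℝ V]
    (a : V →L[ℝ] V →L[ℝ] ℝ)
    (hsym : ∀ x y : V, a x y = a y x)
    (χ : ℝ) (hχ : 0 < χ)
    (T : ℝ) (hT : 0 < T)
    (u u' : ℝ → V)
    (hderiv : ∀ t ∈ Set.Icc (0 : ℝ) T, HasDerivWithinAt u (u' t) (Set.Icc 0 T) t)
    (hu'cont : ContinuousOn u' (Set.Icc 0 T))
    (ℓ : ℝ → V →ₗ[ℝ] ℝ)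
    (hℓcont : ContinuousOn (fun s => ℓ s (u' s)) (Set.Icc 0 T))
    (heq : ∀ t ∈ Set.Icc (0 : ℝ) T, ∀ φ : V, a (u t) φ + χ * a (u' t) φ = ℓ t φ) :
    ∀ t ∈ Set.Icc (0 : ℝ) T,
      (1 / 2) * a (u t) (u t) + ∫ s in (0 : ℝ)..t, χ * a (u' s) (u' s)
        = (1 / 2) * a (u 0) (u 0) + ∫ s in (0 : ℝ)..t, ℓ s (u' s) := by
  intro t ht
  obtain ⟨ht0, htT⟩ := ht
  have hsub : Set.Icc (0:ℝ) t ⊆ Set.Icc 0 T := Set.Icc_subset_Icc le_rfl htT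
  have hucont : ContinuousOn u (Set.Icc 0 T) := fun s hs => (hderiv s hs).continuousWithinAt
  -- continuity of s ↦ a (u s) (u' s) on Icc 0 T
  have hcont2 : Continuous (fun p : V × V => a p.1 p.2) := a.continuous₂
  have hauu' : ContinuousOn (fun s => a (u s) (u' s)) (Set.Icc 0 T) :=
    hcont2.comp_continuousOn (hucont.prodMk hu'cont)
  have hau'u' : ContinuousOn (fun s => a (u' s) (u' s)) (Set.Icc 0 T) :=
    hcont2.comp_continuousOn (hu'cont.prodMk hu'cont)
  have hEcont : ContinuousOn (fun s => (1/2 : ℝ) * a (u s) (u s)) (Set.Icc 0 T) :=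
    (hcont2.comp_continuousOn (hucont.prodMk hucont)).const_smul (1/2 : ℝ)
  -- derivative of the energy
  have hE : ∀ s ∈ Set.Icc (0:ℝ) T,
      HasDerivWithinAt (fun s => (1/2 : ℝ) * a (u s) (u s)) (a (u s) (u' s))
        (Set.Icc 0 T) s := by
    intro s hs
    have h1 : HasDerivWithinAt (fun s => a (u s)) (a (u' s)) (Set.Icc 0 T) s :=
      (a.hasFDerivAt).comp_hasDerivWithinAt s (hderiv s hs)
    have h2 := h1.clm_apply (hderiv s hs)
    have h3 := h2.const_mul (1/2 : ℝ)
    convert h3 using 1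
    case e'_4 => rfl
    case e'_5 => rfl
    rw [hsym (u' s) (u s)]
    ring
  -- integrability on [0, t]
  have hint1 : IntervalIntegrable (fun s => a (u s) (u' s)) MeasureTheory.volume 0 t := by
    apply ContinuousOn.intervalIntegrable
    rw [Set.uIcc_of_le ht0]
    exact hauu'.mono hsub
  have hint2 : IntervalIntegrable (fun s => χ * a (u' s) (u' s)) MeasureTheory.volume 0 t := by
    apply ContinuousOn.intervalIntegrable
    rw [Set.uIcc_of_le ht0]
    exact ((hau'u'.mono hsub).const_smul χ)
  have hint3 : IntervalIntegrable (fun s => ℓ s (u' s)) MeasureTheory.volume 0 t := by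
    apply ContinuousOn.intervalIntegrable
    rw [Set.uIcc_of_le ht0]
    exact hℓcont.mono hsub
  -- FTC
  have hftc : ∫ s in (0:ℝ)..t, a (u s) (u' s)
      = (1/2 : ℝ) * a (u t) (u t) - (1/2 : ℝ) * a (u 0) (u 0) := by
    apply intervalIntegral.integral_eq_sub_of_hasDeriv_right_of_le ht0
    · exact (hEcont.mono hsub)
    · intro x hx
      have hxT : x ∈ Set.Ioo (0:ℝ) T := ⟨hx.1, lt_of_lt_of_le hx.2 htT⟩
      have := (hE x (Set.Ioo_subset_Icc_self hxT)).hasDerivAt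
        (Icc_mem_nhds hxT.1 hxT.2)
      exact this.hasDerivWithinAt
    · exact hint1
  -- pointwise identity under the integral
  have hptw : ∀ s ∈ Set.uIcc (0:ℝ) t,
      ℓ s (u' s) = a (u s) (u' s) + χ * a (u' s) (u' s) := by
    intro s hs
    rw [Set.uIcc_of_le ht0] at hs
    exact (heq s (hsub hs) (u' s)).symm
  have hsplit : ∫ s in (0:ℝ)..t, ℓ s (u' s)
      = (∫ s in (0:ℝ)..t, a (u s) (u' s)) + ∫ s in (0:ℝ)..t, χ * a (u' s) (u' s) := by
    rw [← intervalIntegral.integral_add hint1 hint2]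
    apply intervalIntegral.integral_congr
    intro s hs
    exact hptw s hs
  rw [hsplit, hftc]
  ring
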